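/- Given a permutation ω of [n] and two subsets Λ_u ⊆ Λ_v of [n] such that both Λ_u and Λ_v are initial segments {σ(1),...,σ(k)} of permutations σ with INV(σ) ⊆ INV(ω), there exists a single permutation τ with INV(τ) ⊆ INV(ω) such that Λ_u = {τ(1),...,τ(|Λ_u|)} and Λ_v = {τ(1),...,τ(|Λ_v|)}. -/

import Mathlib

/-! Common definitions: graded posets, saturated/maximal chains, EL-labelings,
inversions and weak order on permutations, descent operators, flag vectors. -/

section Perm

/-- The inversion set `INV(v) = {(v j, v i) : i < j, v i > v j}` of a permutation of `Fin n`. -/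
def invSet {n : ℕ} (v : Equiv.Perm (Fin n)) : Set (Fin n × Fin n) :=
  {p | ∃ i j : Fin n, i < j ∧ v j = p.1 ∧ v i = p.2 ∧ v j < v i}

/-- The number of inversions of a permutation. -/
noncomputable def invCount {n : ℕ} (v : Equiv.Perm (Fin n)) : ℕ :=
  (invSet v).ncard

/-- The adjacent transposition swapping `i` and `i+1` (0-indexed) in `Fin n`
(junk value `1` if out of range). -/
def adjSwap (n : ℕ) (i : ℕ) : Equiv.Perm (Fin n) :=
  if h : i + 1 < n then Equiv.swap ⟨i, Nat.lt_of_succ_lt h⟩ ⟨i + 1, h⟩ else 1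

/-- One step of the right weak order: `v` is obtained from `w` by multiplying on the
right by an adjacent transposition which removes exactly one inversion. -/
def weakStep {n : ℕ} (w v : Equiv.Perm (Fin n)) : Prop :=
  ∃ i : ℕ, i + 1 < n ∧ v = w * adjSwap n i ∧ invCount v + 1 = invCount w

/-- Right weak order: `v ≤_R w` iff `v` is obtained from `w` by a sequence of
inversion-removing right multiplications by adjacent transpositions. -/
def leRW {n : ℕ} (v w : Equiv.Perm (Fin n)) : Prop :=
  Relation.ReflTransGen weakStep w v

end Perm

section Posets

variable {P : Type*}

/-- `c` (an `ℕ`-indexed sequence, constant equal to `y` from index `k` on) is a saturated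
chain `x = c 0 ⋖ c 1 ⋖ ⋯ ⋖ c k = y` of length `k` from `x` to `y`. -/
def IsSatChain [PartialOrder P] (k : ℕ) (c : ℕ → P) (x y : P) : Prop :=
  c 0 = x ∧ (∀ j, k ≤ j → c j = y) ∧ ∀ j, j < k → c j ⋖ c (j + 1)

/-- The chain `c` of length `k` has (weakly) increasing labels. -/
def IncreasingChain [PartialOrder P] (lab : P → P → ℤ) (k : ℕ) (c : ℕ → P) : Prop :=
  ∀ j, j + 1 < k → lab (c j) (c (j + 1)) ≤ lab (c (j + 1)) (c (j + 2))

/-- The label word of length-`k` chain `c` lexicographically strictly precedes that of `d`. -/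
def LexLt [PartialOrder P] (lab : P → P → ℤ) (k : ℕ) (c d : ℕ → P) : Prop :=
  ∃ i < k, (∀ j, j < i → lab (c j) (c (j + 1)) = lab (d j) (d (j + 1))) ∧
    lab (c i) (c (i + 1)) < lab (d i) (d (i + 1))

/-- `lab` is an EL-labeling: in every interval `[x,y]` (containing a saturated chain of
length `k`), there is a unique maximal chain with increasing labels, and it is
lexicographically strictly smaller than every other maximal chain of the interval. -/
def IsELLabeling [PartialOrder P] (lab : P → P → ℤ) : Prop :=
  ∀ x y : P, x < y → ∀ k : ℕ, (∃ c, IsSatChain k c x y) →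
    (∃! c, IsSatChain k c x y ∧ IncreasingChain lab k c) ∧
    ∀ c d, IsSatChain k c x y → IncreasingChain lab k c → IsSatChain k d x y → c ≠ d →
      LexLt lab k c d

/-- `rk` is a rank function making `P` a graded poset of rank `n`, with `rk ⊥ = 0`,
`rk ⊤ = n`, and ranks increasing by one along covers. -/
def IsGraded [PartialOrder P] [BoundedOrder P] (n : ℕ) (rk : P → ℕ) : Prop :=
  rk (⊥ : P) = 0 ∧ rk (⊤ : P) = n ∧ ∀ x y : P, x ⋖ y → rk y = rk x + 1

/-- `lab` is an `S_n` EL-labeling: an EL-labeling such that the label word of every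
maximal chain of `P` is a permutation of `{1, …, n}`. -/
def IsSnELLabeling [PartialOrder P] [BoundedOrder P] (n : ℕ) (lab : P → P → ℤ) : Prop :=
  IsELLabeling lab ∧
    ∀ c : ℕ → P, IsSatChain n c ⊥ ⊤ →
      ∃ σ : Equiv.Perm (Fin n), ∀ j : Fin n, lab (c j) (c ((j : ℕ) + 1)) = ((σ j : ℕ) : ℤ) + 1

/-- The maximal chains of a graded bounded poset of rank `n`. -/
abbrev MaxChain (n : ℕ) (P : Type*) [PartialOrder P] [BoundedOrder P] :=
  {c : ℕ → P // IsSatChain n c ⊥ ⊤}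

/-- The label word of `c` has a descent at position `i` (meaningful for `1 ≤ i ≤ n-1`):
the label of the `i`-th edge exceeds the label of the `(i+1)`-st edge. -/
def DescentAt [PartialOrder P] (lab : P → P → ℤ) (c : ℕ → P) (i : ℕ) : Prop :=
  lab (c i) (c (i + 1)) < lab (c (i - 1)) (c i)

/-- The maximal chain `c` has label word (the permutation) `σ`, where the label of the
`j`-th edge is `σ(j)` (written 1-indexed: the value `(σ j) + 1`). -/
def HasWord [PartialOrder P] (lab : P → P → ℤ) {n : ℕ} (c : ℕ → P)
    (σ : Equiv.Perm (Fin n)) : Prop :=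
  ∀ j : Fin n, lab (c j) (c ((j : ℕ) + 1)) = ((σ j : ℕ) : ℤ) + 1

/-- The defining property of the descent-removing operators `U_i` attached to an
`S_n` EL-labeling: `U i m` agrees with `m` away from rank `i` and has no descent at `i`. -/
def IsUSystem [PartialOrder P] [BoundedOrder P] (n : ℕ) (lab : P → P → ℤ)
    (U : ℕ → MaxChain n P → MaxChain n P) : Prop :=
  ∀ i, 1 ≤ i → i < n → ∀ m : MaxChain n P,
    (∀ j, j ≠ i → (U i m).1 j = m.1 j) ∧ ¬ DescentAt lab (U i m).1 i

/-- `m'` lies in the closure of the maximal chain `m` under the operators `U_i`. -/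
def InClosure [PartialOrder P] [BoundedOrder P] (n : ℕ)
    (U : ℕ → MaxChain n P → MaxChain n P) (m m' : MaxChain n P) : Prop :=
  ∃ l : List ℕ, (∀ i ∈ l, 1 ≤ i ∧ i < n) ∧ List.foldr U m l = m'

/-- `α_P(S)`: the number of chains of `P` whose rank set is exactly `S`. -/
noncomputable def alphaP [PartialOrder P] (rk : P → ℕ) (S : Finset ℕ) : ℕ :=
  Nat.card {t : Finset P // IsChain (· ≤ ·) (t : Set P) ∧ t.image rk = S ∧ t.card = S.card}

/-- The flag `h`-vector `β_P(S) = ∑_{T ⊆ S} (-1)^{|S - T|} α_P(T)`. -/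
noncomputable def betaP [PartialOrder P] (rk : P → ℕ) (S : Finset ℕ) : ℤ :=
  ∑ T ∈ S.powerset, (-1 : ℤ) ^ (S.card - T.card) * (alphaP rk T : ℤ)

/-- `P` is bowtie-free: there are no distinct `a, b, c, d` with `a` and `b` each
covering both `c` and `d`. -/
def BowtieFree (P : Type*) [PartialOrder P] : Prop :=
  ∀ a b c d : P, c ⋖ a → d ⋖ a → c ⋖ b → d ⋖ b → a = b ∨ c = d

/-- The operators `U_i`, `1 ≤ i ≤ n-1`, form a local 0-Hecke action on the maximal
chains: they are local at rank `i`, idempotent, commute at distance `≥ 2`, and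
satisfy the braid relations. -/
def IsLocalHeckeAction [PartialOrder P] [BoundedOrder P] (n : ℕ)
    (U : ℕ → MaxChain n P → MaxChain n P) : Prop :=
  (∀ i, 1 ≤ i → i < n → ∀ m : MaxChain n P, ∀ j, j ≠ i → (U i m).1 j = m.1 j) ∧
  (∀ i, 1 ≤ i → i < n → ∀ m, U i (U i m) = U i m) ∧
  (∀ i j, 1 ≤ i → i < n → 1 ≤ j → j < n → i + 2 ≤ j → ∀ m, U i (U j m) = U j (U i m)) ∧
  (∀ i, 1 ≤ i → i + 1 < n → ∀ m,
    U i (U (i + 1) (U i m)) = U (i + 1) (U i (U (i + 1) m)))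

/-- A good `H_n(0)` action: a local 0-Hecke action on the maximal chains such that for
every `S ⊆ [n-1]`, `α_P(S)` equals the number of maximal chains whose descent set
`{i : U_i m ≠ m}` is contained in `S` (equivalently, `ω F_P = ch χ_P`). -/
def IsGoodHeckeAction [PartialOrder P] [BoundedOrder P] (n : ℕ) (rk : P → ℕ)
    (U : ℕ → MaxChain n P → MaxChain n P) : Prop :=
  IsLocalHeckeAction n U ∧
    ∀ S : Finset ℕ, S ⊆ Finset.Icc 1 (n - 1) →
      alphaP rk S =
        Nat.card {m : MaxChain n P // ∀ i, 1 ≤ i → i < n → U i m ≠ m → i ∈ S}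

/-- An expression `U_{i_1} ⋯ U_{i_r} (m) = m'` (the list `l = [i_1, …, i_r]`, applied
right-to-left) is restless: every single application strictly changes the chain. -/
def Restless [PartialOrder P] [BoundedOrder P] {n : ℕ}
    (U : ℕ → MaxChain n P → MaxChain n P) (l : List ℕ) (m m' : MaxChain n P) : Prop :=
  List.foldr U m l = m' ∧
    ∀ i t, (i :: t) <:+ l → U i (List.foldr U m t) ≠ List.foldr U m t

/-- A subset of a lattice closed under join and meet. -/
def SublClosed [Lattice P] (t : Set P) : Prop :=
  ∀ a ∈ t, ∀ b ∈ t, a ⊔ b ∈ t ∧ a ⊓ b ∈ t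

/-- The sublattice generated by the set `s`. -/
def genSub [Lattice P] (s : Set P) : Set P :=
  ⋂₀ {t : Set P | s ⊆ t ∧ SublClosed t}

/-- The subset `t` is distributive (as a sublattice). -/
def DistribOn [Lattice P] (t : Set P) : Prop :=
  ∀ a ∈ t, ∀ b ∈ t, ∀ c ∈ t, a ⊓ (b ⊔ c) = (a ⊓ b) ⊔ (a ⊓ c)

/-- A lattice (graded, of rank `n`) is supersolvable if it has a maximal chain (an
M-chain) which together with any other chain generates a distributive sublattice. -/
def Supersolvable (n : ℕ) (P : Type*) [Lattice P] [BoundedOrder P] : Prop :=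
  ∃ M : MaxChain n P, ∀ c : Set P, IsChain (· ≤ ·) c →
    DistribOn (genSub (Set.range M.1 ∪ c))

end Posets

lemma seg_aux {n : ℕ} (D : Set (Fin n))
    (hD : ∀ i j : Fin n, i ≤ j → j ∈ D → i ∈ D) :
    D = {j : Fin n | (j : ℕ) < D.ncard} := by
  ext j
  simp only [Set.mem_setOf_eq]
  constructor
  · intro hj
    have h1 : (↑(Finset.Iic j) : Set (Fin n)) ⊆ D := by
      intro i hi
      simp only [Finset.coe_Iic, Set.mem_Iic] at hi
      exact hD i j hi hj
    have h2 := Set.ncard_le_ncard h1 (Set.toFinite D)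
    rw [Set.ncard_coe_finset, Fin.card_Iic] at h2
    omega
  · intro hj
    by_contra hjD
    have h1 : D ⊆ (↑(Finset.Iio j) : Set (Fin n)) := by
      intro i hi
      simp only [Finset.coe_Iio, Set.mem_Iio]
      by_contra h
      push_neg at h
      exact hjD (hD j i h hi)
    have h2 := Set.ncard_le_ncard h1 (Set.toFinite _)
    rw [Set.ncard_coe_finset, Fin.card_Iio] at h2
    omega

/-- If `Λ` is the initial segment of size `k` of `σ`, `b ∈ Λ`, `a ∉ Λ`, `a < b`,
then `(a, b) ∈ invSet σ`. -/
lemma inv_of_seg {n k : ℕ} (σ : Equiv.Perm (Fin n)) (Λ : Set (Fin n))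
    (hΛ : Λ = ⇑σ '' {j : Fin n | (j : ℕ) < k}) {a b : Fin n}
    (hb : b ∈ Λ) (ha : a ∉ Λ) (hab : a < b) : (a, b) ∈ invSet σ := by
  subst hΛ
  obtain ⟨jb, hjb, rfl⟩ := hb
  refine ⟨jb, σ.symm a, ?_, by simp, rfl, ?_⟩
  · have : ¬ ((σ.symm a : ℕ) < k) := by
      intro h
      exact ha ⟨σ.symm a, h, by simp⟩
    simp only [Set.mem_setOf_eq] at hjb
    have : (jb : ℕ) < (σ.symm a : ℕ) := by omega
    exact this
  · simpa using hab


/-- If `Λ_u ⊆ Λ_v` are both initial segments of permutations whose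
inversion sets are contained in `INV(ω)`, then they are nested initial segments of a
single permutation `τ` with `INV(τ) ⊆ INV(ω)`. -/
theorem nested_initial_segments {n : ℕ} (ω : Equiv.Perm (Fin n))
    (Λu Λv : Set (Fin n)) (hsub : Λu ⊆ Λv)
    (hu : ∃ (k : ℕ) (σ : Equiv.Perm (Fin n)), invSet σ ⊆ invSet ω ∧
      Λu = ⇑σ '' {j : Fin n | (j : ℕ) < k})
    (hv : ∃ (k : ℕ) (σ : Equiv.Perm (Fin n)), invSet σ ⊆ invSet ω ∧
      Λv = ⇑σ '' {j : Fin n | (j : ℕ) < k}) :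
    ∃ τ : Equiv.Perm (Fin n), invSet τ ⊆ invSet ω ∧
      Λu = ⇑τ '' {j : Fin n | (j : ℕ) < Λu.ncard} ∧
      Λv = ⇑τ '' {j : Fin n | (j : ℕ) < Λv.ncard} := by
  classical
  obtain ⟨k1, σ1, hσ1, hΛu⟩ := hu
  obtain ⟨k2, σ2, hσ2, hΛv⟩ := hv
  set f : Fin n → ℕ :=
    fun x => (if x ∈ Λu then 0 else if x ∈ Λv then 1 else 2) * n + (x : ℕ) with hf
  have hfinj : Function.Injective f := by
    intro x y h
    have hx := x.isLt
    have hy := y.isLt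
    simp only [hf] at h
    apply Fin.ext
    split_ifs at h <;> omega
  set τ : Equiv.Perm (Fin n) := Tuple.sort f with hτ
  have hmono : StrictMono (f ∘ τ) :=
    (Tuple.monotone_sort f).strictMono_of_injective (hfinj.comp τ.injective)
  -- the key block comparison: any inversion of τ crosses the blocks
  have hinv : invSet τ ⊆ invSet ω := by
    rintro ⟨a, b⟩ ⟨i, j, hij, h1, h2, hlt⟩
    simp only at h1 h2 hlt
    have hfab : f b < f a := by
      have := hmono hij
      simp only [Function.comp_apply, h1, h2] at this
      exact this
    have hab : a < b := by rw [← h1, ← h2]; exact hlt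
    have habn : (a : ℕ) < (b : ℕ) := hab
    have key : (b ∈ Λu ∧ a ∉ Λu) ∨ (b ∈ Λv ∧ a ∉ Λv) := by
      have ha := a.isLt
      have hb := b.isLt
      by_cases hau : a ∈ Λu <;> by_cases hbu : b ∈ Λu <;>
        by_cases hav : a ∈ Λv <;> by_cases hbv : b ∈ Λv <;>
        simp only [hf, hau, hbu, hav, hbv, if_pos, if_neg, if_true, if_false,
          not_true, not_false_iff] at hfab ⊢ <;>
        first
          | (left; exact ⟨trivial, fun h => by omega⟩)
          | (exact absurd (hsub hau) hav)
          | (exact absurd (hsub hbu) hbv)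
          | omega
          | tauto
    rcases key with ⟨hb, ha⟩ | ⟨hb, ha⟩
    · exact hσ1 (inv_of_seg σ1 Λu hΛu hb ha hab)
    · exact hσ2 (inv_of_seg σ2 Λv hΛv hb ha hab)
  refine ⟨τ, hinv, ?_, ?_⟩
  · -- Λu part
    set D : Set (Fin n) := ⇑τ ⁻¹' Λu with hD
    have hDcard : D.ncard = Λu.ncard := by
      rw [hD, ← Equiv.image_symm_eq_preimage]
      exact Set.ncard_image_of_injective _ τ.symm.injective
    have hdown : ∀ i j : Fin n, i ≤ j → j ∈ D → i ∈ D := by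
      intro i j hij hj
      rcases eq_or_lt_of_le hij with rfl | hij
      · exact hj
      have hfij : f (τ i) < f (τ j) := hmono hij
      simp only [hD, Set.mem_preimage] at hj ⊢
      have hju : f (τ j) < n := by simp only [hf, hj, if_pos]; simpa using (τ j).isLt
      by_contra hi
      have : n ≤ f (τ i) := by
        simp only [hf, hi, if_neg, not_false_iff]
        split_ifs <;> omega
      omega
    have := seg_aux D hdown
    rw [hDcard] at this
    rw [← this, hD, Set.image_preimage_eq _ τ.surjective]
  · -- Λv part
    set D : Set (Fin n) := ⇑τ ⁻¹' Λv with hD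
    have hDcard : D.ncard = Λv.ncard := by
      rw [hD, ← Equiv.image_symm_eq_preimage]
      exact Set.ncard_image_of_injective _ τ.symm.injective
    have hdown : ∀ i j : Fin n, i ≤ j → j ∈ D → i ∈ D := by
      intro i j hij hj
      rcases eq_or_lt_of_le hij with rfl | hij
      · exact hj
      have hfij : f (τ i) < f (τ j) := hmono hij
      simp only [hD, Set.mem_preimage] at hj ⊢
      have hjv : f (τ j) < 2 * n := by
        have := (τ j).isLt
        by_cases hju : τ j ∈ Λu <;>
          simp only [hf, hju, hj, if_pos, if_neg, if_true, if_false, not_false_iff] <;>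
          omega
      by_contra hi
      have : 2 * n ≤ f (τ i) := by
        have hiu : τ i ∉ Λu := fun h => hi (hsub h)
        simp only [hf, hiu, hi, if_neg, not_false_iff]
        omega
      omega
    have := seg_aux D hdown
    rw [hDcard] at this
    rw [← this, hD, Set.image_preimage_eq _ τ.surjective]
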